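/- Let p : ℕ → ℚ satisfy p(L) = 1/(L+1) + (1/(L+1))·∑_{k=2}^{L} p(k-1) for all L ≥ 1. Then p(L) = 1/2 for all L ≥ 1. -/
import Mathlib


/-- The probability that the left-most dimer is `(1,2)` in random sequential dimer covering of
an interval with `L` sites equals `1/2`. -/
theorem no_left_overhang (p : ℕ → ℚ)
    (hrec : ∀ L : ℕ, 1 ≤ L →
      p L = 1 / ((L : ℚ) + 1) + (1 / ((L : ℚ) + 1)) * ∑ k ∈ Finset.Icc 2 L, p (k - 1)) :
    ∀ L : ℕ, 1 ≤ L → p L = 1 / 2 := by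
  intro L
  induction L using Nat.strong_induction_on with
  | _ L ih =>
    intro hL
    rw [hrec L hL]
    have hsum : ∑ k ∈ Finset.Icc 2 L, p (k - 1) = ((L : ℚ) - 1) * (1 / 2) := by
      rw [Finset.sum_congr rfl (fun k hk => ?_)]
      · rw [Finset.sum_const, Nat.card_Icc]
        have : ((L + 1 - 2 : ℕ) : ℚ) = (L : ℚ) - 1 := by
          have : L + 1 - 2 = L - 1 := by omega
          rw [this, Nat.cast_sub hL]; norm_num
        rw [nsmul_eq_mul, this]
      · simp only [Finset.mem_Icc] at hk
        exact ih (k - 1) (by omega) (by omega)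
    rw [hsum]
    have h : (L : ℚ) + 1 ≠ 0 := by positivity
    field_simp
    ring
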